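/- With η := φψ as above, the generators are related by L_Z f = (1/η) L_Y*(η f) for all f ∈ C²_c(G), where L_Y is the generator of the Ψ-controlled process and L_Z the generator of the Φ-controlled process. -/

import Mathlib

open Matrix

/-- Partial derivative `∂f/∂x_i` of `f : ℝ^d → ℝ`. -/
noncomputable def pd {d : ℕ} (f : (Fin d → ℝ) → ℝ) (i : Fin d) (x : Fin d → ℝ) : ℝ :=
  fderiv ℝ f x (Pi.single i 1)

/-- Gradient of `f : ℝ^d → ℝ`. -/
noncomputable def grad {d : ℕ} (f : (Fin d → ℝ) → ℝ) (x : Fin d → ℝ) : Fin d → ℝ :=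
  fun i => pd f i x

/-- Second partial derivative `∂²f/∂x_i∂x_j`. -/
noncomputable def pd2 {d : ℕ} (f : (Fin d → ℝ) → ℝ) (i j : Fin d) (x : Fin d → ℝ) : ℝ :=
  pd (pd f j) i x

/-- Hessian matrix of `f : ℝ^d → ℝ`. -/
noncomputable def hess {d : ℕ} (f : (Fin d → ℝ) → ℝ) (x : Fin d → ℝ) :
    Matrix (Fin d) (Fin d) ℝ :=
  Matrix.of fun i j => pd2 f i j x


/-- The drift `β` of the formal adjoint `L*`: `β_i = −b_i + Σ_j ∂_j a_{ij}`. -/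
noncomputable def betaOf {d : ℕ} (a : (Fin d → ℝ) → Matrix (Fin d) (Fin d) ℝ)
    (b : (Fin d → ℝ) → (Fin d → ℝ)) (x : Fin d → ℝ) : Fin d → ℝ :=
  fun i => -(b x i) + ∑ j, pd (fun y => a y i j) j x

/-- The zeroth order coefficient of `L*`:
`c = −(1/2)Σ_{i,j} ∂_i∂_j a_{ij} + Σ_i ∂_i b_i`. -/
noncomputable def cOf {d : ℕ} (a : (Fin d → ℝ) → Matrix (Fin d) (Fin d) ℝ)
    (b : (Fin d → ℝ) → (Fin d → ℝ)) (x : Fin d → ℝ) : ℝ :=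
  -(1 / 2) * ∑ i, ∑ j, pd2 (fun y => a y i j) i j x + ∑ i, pd (fun y => b y i) i x

/-- The formal adjoint `L_Y*` of the generator `L_Y f = b·Df − Df·aDΨ + (1/2)tr[a D²f]`
of the `Ψ`-controlled process:
`L_Y* h = β̂·Dh + (1/2)tr[a D²h] − ĉ h` with `β̂_i = −b_i − (aDψ)_i/ψ + Σ_j ∂_j a_{ij}` and
`ĉ = c − Σ_{i,j} ∂_i(a_{ij}Ψ_{x_j})`, where `Ψ = −log ψ`. -/
noncomputable def LYstar {d : ℕ} (a : (Fin d → ℝ) → Matrix (Fin d) (Fin d) ℝ)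
    (b : (Fin d → ℝ) → (Fin d → ℝ)) (ψ : (Fin d → ℝ) → ℝ)
    (h : (Fin d → ℝ) → ℝ) (x : Fin d → ℝ) : ℝ :=
  (fun i => -(b x i) - (a x).mulVec (grad ψ x) i / ψ x
      + ∑ j, pd (fun y => a y i j) j x) ⬝ᵥ grad h x
    + (1 / 2) * (a x * hess h x).trace
    - (cOf a b x
        - ∑ i, ∑ j, pd (fun y => a y i j * pd (fun z => -Real.log (ψ z)) j y) i x) * h x

/-! ### Auxiliary lemmas for partial derivatives -/

lemma pd_congr {d : ℕ} {f g : (Fin d → ℝ) → ℝ} {x : Fin d → ℝ}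
    (h : f =ᶠ[nhds x] g) (i : Fin d) : pd f i x = pd g i x := by
  unfold pd; rw [h.fderiv_eq]

lemma pd_add {d : ℕ} {f g : (Fin d → ℝ) → ℝ} {x : Fin d → ℝ}
    (hf : DifferentiableAt ℝ f x) (hg : DifferentiableAt ℝ g x) (i : Fin d) :
    pd (fun y => f y + g y) i x = pd f i x + pd g i x := by
  unfold pd; rw [fderiv_fun_add hf hg]; simp

lemma pd_mul {d : ℕ} {f g : (Fin d → ℝ) → ℝ} {x : Fin d → ℝ}
    (hf : DifferentiableAt ℝ f x) (hg : DifferentiableAt ℝ g x) (i : Fin d) :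
    pd (fun y => f y * g y) i x = pd f i x * g x + f x * pd g i x := by
  unfold pd; rw [fderiv_fun_mul hf hg]; simp; ring

lemma pd_neg_log {d : ℕ} {f : (Fin d → ℝ) → ℝ} {x : Fin d → ℝ}
    (hf : DifferentiableAt ℝ f x) (h0 : f x ≠ 0) (i : Fin d) :
    pd (fun y => -Real.log (f y)) i x = -(pd f i x / f x) := by
  unfold pd
  have h1 : HasFDerivAt (fun y => Real.log (f y)) ((f x)⁻¹ • fderiv ℝ f x) x :=
    (hf.hasFDerivAt).log h0
  have h2 := h1.fun_neg
  rw [h2.fderiv]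
  simp [div_eq_inv_mul]

lemma pd_inv {d : ℕ} {g : (Fin d → ℝ) → ℝ} {x : Fin d → ℝ}
    (hg : DifferentiableAt ℝ g x) (h0 : g x ≠ 0) (i : Fin d) :
    pd (fun y => (g y)⁻¹) i x = -(pd g i x / (g x)^2) := by
  unfold pd
  have h1 : HasFDerivAt (fun y => (g y)⁻¹)
      ((ContinuousLinearMap.smulRight (1 : ℝ →L[ℝ] ℝ) (-((g x) ^ 2)⁻¹)).comp (fderiv ℝ g x)) x :=
    (hasFDerivAt_inv h0).comp x hg.hasFDerivAt
  rw [h1.fderiv]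
  simp [div_eq_mul_inv]

lemma pd_div {d : ℕ} {f g : (Fin d → ℝ) → ℝ} {x : Fin d → ℝ}
    (hf : DifferentiableAt ℝ f x) (hg : DifferentiableAt ℝ g x) (h0 : g x ≠ 0) (i : Fin d) :
    pd (fun y => f y / g y) i x = (pd f i x * g x - f x * pd g i x) / (g x)^2 := by
  have h2 : DifferentiableAt ℝ (fun y => (g y)⁻¹) x := hg.inv h0
  have h3 : pd (fun y => f y / g y) i x = pd (fun y => f y * (g y)⁻¹) i x := by
    simp [div_eq_mul_inv]
  rw [h3, pd_mul hf h2, pd_inv hg h0]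
  field_simp
  ring

lemma pd_neg {d : ℕ} {f : (Fin d → ℝ) → ℝ} {x : Fin d → ℝ} (i : Fin d) :
    pd (fun y => -f y) i x = -(pd f i x) := by
  unfold pd; rw [fderiv_fun_neg]; simp

lemma contDiffAt_pd {d : ℕ} {n : ℕ} {f : (Fin d → ℝ) → ℝ} {x : Fin d → ℝ}
    (hf : ContDiffAt ℝ (n+1 : ℕ) f x) (j : Fin d) : ContDiffAt ℝ n (pd f j) x := by
  have h1 : ContDiffAt ℝ n (fderiv ℝ f) x := hf.fderiv_right (by norm_cast)
  exact (ContinuousLinearMap.apply ℝ ℝ (Pi.single j 1 : Fin d → ℝ)).contDiff.contDiffAt.comp x h1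

lemma differentiableAt_pd {d : ℕ} {f : (Fin d → ℝ) → ℝ} {x : Fin d → ℝ}
    (hf : ContDiffAt ℝ 2 f x) (j : Fin d) : DifferentiableAt ℝ (pd f j) x := by
  have : ContDiffAt ℝ (1:ℕ) (pd f j) x := contDiffAt_pd (n:=1) (by exact_mod_cast hf) j
  exact this.differentiableAt (by norm_cast)

/-! ### Auxiliary lemmas for sums -/

lemma sum_eq {d : ℕ} {g h : Fin d → ℝ} (H : ∀ i, g i = h i) : ∑ i, g i = ∑ i, h i :=
  Finset.sum_congr rfl fun i _ => H i

lemma sum_factor {d : ℕ} (M u : Fin d → ℝ) (c : ℝ) :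
    ∑ j, M j * (u j * c) = (∑ j, M j * u j) * c := by
  rw [Finset.sum_mul]; exact sum_eq fun j => by ring

lemma sum_factor' {d : ℕ} (M u : Fin d → ℝ) (c : ℝ) :
    ∑ j, M j * (c * u j) = (∑ j, M j * u j) * c := by
  rw [Finset.sum_mul]; exact sum_eq fun j => by ring

lemma swapAB {d : ℕ} (A : Fin d → Fin d → ℝ) (hA : ∀ i j, A i j = A j i)
    (g : Fin d → Fin d → ℝ) :
    ∑ i, ∑ j, A i j * g i j = ∑ i, ∑ j, A i j * g j i := by
  rw [Finset.sum_comm]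
  exact sum_eq fun i => sum_eq fun j => by rw [hA]

lemma trace_hess {d : ℕ} (A : Matrix (Fin d) (Fin d) ℝ) (g : (Fin d → ℝ) → ℝ)
    (x : Fin d → ℝ) : (A * hess g x).trace = ∑ i, ∑ j, A i j * pd2 g j i x := by
  simp [Matrix.trace, Matrix.mul_apply, Matrix.diag, hess]

lemma lemB {d : ℕ} (A dA Hψ Hφ : Fin d → Fin d → ℝ)
    (bv βv P Q : Fin d → ℝ) (c s t lam : ℝ) (hs : s ≠ 0) (ht : t ≠ 0)
    (hA : ∀ i j, A i j = A j i)
    (hdA : ∀ j, (∑ i, dA i j) = βv j + bv j)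
    (E1 : (∑ i, bv i * P i) + (1/2) * (∑ i, ∑ j, A i j * Hψ j i) = -lam * s)
    (E2 : (∑ i, βv i * Q i) + (1/2) * (∑ i, ∑ j, A i j * Hφ j i) - c * t = -lam * t) :
    (∑ i, (βv i - (∑ j, A i j * P j)/s) * (Q i * s + t * P i))
      + (1/2) * (∑ i, ∑ j, A i j * (Hφ j i * s + Q i * P j + Q j * P i + t * Hψ j i))
      - (c - (∑ i, ∑ j, (dA i j * (-(P j / s))
          + A i j * (-((Hψ i j * s - P j * P i)/s^2))))) * (t * s) = 0 := by
  have conv1 : (∑ i, (βv i - (∑ j, A i j * P j)/s) * (Q i * s + t * P i))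
      = s * (∑ i, βv i * Q i) + t * (∑ i, βv i * P i)
        - (∑ i, (∑ j, A i j * P j) * Q i) - (t/s) * (∑ i, (∑ j, A i j * P j) * P i) := by
    simp only [Finset.mul_sum, ← Finset.sum_sub_distrib, ← Finset.sum_add_distrib]
    exact sum_eq fun i => by field_simp; ring
  have conv2 : (∑ i, ∑ j, A i j * (Hφ j i * s + Q i * P j + Q j * P i + t * Hψ j i))
      = (∑ i, ∑ j, A i j * Hφ j i) * s + (∑ i, (∑ j, A i j * P j) * Q i)
        + (∑ i, (∑ j, A i j * Q j) * P i) + (∑ i, ∑ j, A i j * Hψ j i) * t := by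
    rw [Finset.sum_mul, Finset.sum_mul, ← Finset.sum_add_distrib, ← Finset.sum_add_distrib,
      ← Finset.sum_add_distrib]
    refine sum_eq fun i => ?_
    simp only [mul_add, Finset.sum_add_distrib, Finset.sum_mul, Finset.mul_sum, mul_assoc,
      mul_comm, mul_left_comm]
  have hZX : (∑ i, (∑ j, A i j * Q j) * P i) = ∑ i, (∑ j, A i j * P j) * Q i := by
    have h1 : (∑ i, ∑ j, A i j * (Q j * P i)) = ∑ i, ∑ j, A i j * (Q i * P j) :=
      swapAB A hA fun i j => Q j * P i
    have h2 : (∑ i, (∑ j, A i j * Q j) * P i) = ∑ i, ∑ j, A i j * (Q j * P i) :=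
      sum_eq fun i => (sum_factor (A i) Q (P i)).symm
    have h3 : (∑ i, (∑ j, A i j * P j) * Q i) = ∑ i, ∑ j, A i j * (Q i * P j) :=
      sum_eq fun i => by rw [← sum_factor' (A i) P (Q i)]
    rw [h2, h1, ← h3]
  have hW : (∑ i, ∑ j, A i j * Hψ i j) = ∑ i, ∑ j, A i j * Hψ j i :=
    swapAB A hA fun i j => Hψ i j
  have conv3 : (∑ i, ∑ j, (dA i j * (-(P j / s))
        + A i j * (-((Hψ i j * s - P j * P i)/s^2))))
      = -(1/s) * ((∑ i, βv i * P i) + (∑ i, bv i * P i))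
        - (1/s) * (∑ i, ∑ j, A i j * Hψ j i)
        + (1/s^2) * (∑ i, (∑ j, A i j * P j) * P i) := by
    have h4 : (∑ i, ∑ j, dA i j * (-(P j / s)))
        = -(1/s) * ((∑ i, βv i * P i) + (∑ i, bv i * P i)) := by
      rw [Finset.sum_comm]
      have h5 : ∀ j, (∑ i, dA i j * (-(P j / s))) = (βv j + bv j) * (-(P j/s)) := fun j => by
        rw [← Finset.sum_mul, hdA]
      rw [sum_eq h5, ← Finset.sum_add_distrib, Finset.mul_sum]
      exact sum_eq fun j => by field_simp
    have h6 : (∑ i, ∑ j, A i j * (-((Hψ i j * s - P j * P i)/s^2)))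
        = -(1/s) * (∑ i, ∑ j, A i j * Hψ j i)
          + (1/s^2) * (∑ i, (∑ j, A i j * P j) * P i) := by
      have h7 : (∑ i, ∑ j, A i j * (-((Hψ i j * s - P j * P i)/s^2)))
          = (∑ i, ∑ j, (-(1/s) * (A i j * Hψ i j) + (1/s^2) * (A i j * (P j * P i)))) :=
        sum_eq fun i => sum_eq fun j => by field_simp; ring
      rw [h7]
      simp only [Finset.sum_add_distrib, ← Finset.mul_sum]
      rw [hW, sum_eq (fun i => sum_factor (A i) P (P i))]
    calc (∑ i, ∑ j, (dA i j * (-(P j / s)) + A i j * (-((Hψ i j * s - P j * P i)/s^2))))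
        = (∑ i, ∑ j, dA i j * (-(P j / s)))
          + (∑ i, ∑ j, A i j * (-((Hψ i j * s - P j * P i)/s^2))) := by
          simp only [Finset.sum_add_distrib]
      _ = _ := by rw [h4, h6]; ring
  rw [conv1, conv2, conv3, hZX]
  field_simp
  linear_combination (2*s^2) * E2 - (2*s*t) * E1


lemma lemC {d : ℕ} (A F2 Hη : Fin d → Fin d → ℝ) (βv P Q F : Fin d → ℝ)
    (cS s t f0 : ℝ) (hs : s ≠ 0) (ht : t ≠ 0) (hA : ∀ i j, A i j = A j i) :
    (∑ i, (βv i - (∑ j, A i j * P j)/s) * ((Q i * s + t * P i) * f0 + (t*s) * F i))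
      + (1/2) * (∑ i, ∑ j, A i j * (Hη j i * f0 + (Q i * s + t * P i) * F j
          + (Q j * s + t * P j) * F i + (t*s) * F2 j i))
      - cS * ((t*s) * f0)
    = (t*s) * ((∑ i, βv i * F i) - (∑ i, F i * (∑ j, A i j * (-(Q j / t))))
        + (1/2) * (∑ i, ∑ j, A i j * F2 j i))
      + f0 * ((∑ i, (βv i - (∑ j, A i j * P j)/s) * (Q i * s + t * P i))
          + (1/2) * (∑ i, ∑ j, A i j * Hη j i)
          - cS * (t * s)) := by
  have hX : (∑ i, ∑ j, A i j * ((Q i * s + t * P i) * F j))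
      = ∑ i, ∑ j, A i j * ((Q j * s + t * P j) * F i) :=
    swapAB A hA fun i j => (Q i * s + t * P i) * F j
  have conv2 : (∑ i, ∑ j, A i j * (Hη j i * f0 + (Q i * s + t * P i) * F j
        + (Q j * s + t * P j) * F i + (t*s) * F2 j i))
      = f0 * (∑ i, ∑ j, A i j * Hη j i) + (∑ i, ∑ j, A i j * ((Q i * s + t * P i) * F j))
        + (∑ i, ∑ j, A i j * ((Q j * s + t * P j) * F i))
        + (t*s) * (∑ i, ∑ j, A i j * F2 j i) := by
    simp only [Finset.mul_sum, ← Finset.sum_add_distrib]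
    exact sum_eq fun i => sum_eq fun j => by ring
  have conv1 : (∑ i, (βv i - (∑ j, A i j * P j)/s) * ((Q i * s + t * P i) * f0 + (t*s) * F i))
      = f0 * (∑ i, (βv i - (∑ j, A i j * P j)/s) * (Q i * s + t * P i))
        + (t*s) * (∑ i, βv i * F i) - t * (∑ i, (∑ j, A i j * P j) * F i) := by
    simp only [Finset.mul_sum, ← Finset.sum_add_distrib, ← Finset.sum_sub_distrib]
    exact sum_eq fun i => by field_simp; ring
  have conv4 : (∑ i, F i * (∑ j, A i j * (-(Q j / t))))
      = -(1/t) * ∑ i, (∑ j, A i j * Q j) * F i := by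
    rw [Finset.mul_sum]
    refine sum_eq fun i => ?_
    rw [show (∑ j, A i j * (-(Q j / t))) = (∑ j, A i j * Q j) * (-(1/t)) by
      rw [Finset.sum_mul]; exact sum_eq fun j => by ring]
    ring
  have hX2 : (∑ i, ∑ j, A i j * ((Q j * s + t * P j) * F i))
      = s * (∑ i, (∑ j, A i j * Q j) * F i) + t * (∑ i, (∑ j, A i j * P j) * F i) := by
    rw [Finset.mul_sum, Finset.mul_sum, ← Finset.sum_add_distrib]
    refine sum_eq fun i => ?_
    rw [← sum_factor (A i) Q (F i), ← sum_factor (A i) P (F i),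
      Finset.mul_sum, Finset.mul_sum, ← Finset.sum_add_distrib]
    exact sum_eq fun j => by ring
  rw [conv1, conv2, hX, hX2, conv4]
  have h1t : t * s * (1 / t) = s := by rw [mul_comm t s, mul_assoc, mul_one_div_cancel ht, mul_one]
  linear_combination (-(∑ i, (∑ j, A i j * Q j) * F i)) * h1t


/-- with `η := φψ`, `Ψ := −log ψ`, `Φ := −log φ`, the generators are related by
`L_Z f = (1/η) L_Y*(η f)` on `G` for all `f ∈ C²_c(G)`, where
`L_Z f = β·Df − Df·aDΦ + (1/2)tr[a D²f]`. -/
theorem stmt9 {d : ℕ} (G : Set (Fin d → ℝ)) (hG : IsOpen G)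
    (a : (Fin d → ℝ) → Matrix (Fin d) (Fin d) ℝ) (hsym : ∀ x, (a x).IsSymm)
    (hapos : ∀ x ∈ G, (a x).PosDef) (ha : ∀ i j, ContDiffOn ℝ 2 (fun y => a y i j) G)
    (b : (Fin d → ℝ) → (Fin d → ℝ)) (hb : ∀ i, ContDiffOn ℝ 1 (fun y => b y i) G)
    (lam : ℝ) (ψ φ : (Fin d → ℝ) → ℝ)
    (hψ : ContDiffOn ℝ 3 ψ G) (hφ : ContDiffOn ℝ 3 φ G)
    (hψpos : ∀ x ∈ G, 0 < ψ x) (hφpos : ∀ x ∈ G, 0 < φ x)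
    (hψeig : ∀ x ∈ G,
      b x ⬝ᵥ grad ψ x + (1 / 2) * (a x * hess ψ x).trace = -lam * ψ x)
    (hφeig : ∀ x ∈ G,
      betaOf a b x ⬝ᵥ grad φ x + (1 / 2) * (a x * hess φ x).trace
        - cOf a b x * φ x = -lam * φ x)
    (Φ : (Fin d → ℝ) → ℝ) (hΦ : Φ = fun x => -Real.log (φ x))
    (η : (Fin d → ℝ) → ℝ) (hη : η = fun x => φ x * ψ x) :
    ∀ f : (Fin d → ℝ) → ℝ, ContDiff ℝ 2 f → HasCompactSupport f → tsupport f ⊆ G →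
      ∀ x ∈ G,
        betaOf a b x ⬝ᵥ grad f x - grad f x ⬝ᵥ (a x).mulVec (grad Φ x)
            + (1 / 2) * (a x * hess f x).trace
          = (1 / η x) * LYstar a b ψ (fun y => η y * f y) x := by
  intro f hf _ _ x hx
  subst hΦ hη
  have hmem : G ∈ nhds x := hG.mem_nhds hx
  have hsx : ψ x ≠ 0 := ne_of_gt (hψpos x hx)
  have htx : φ x ≠ 0 := ne_of_gt (hφpos x hx)
  have hsym' : ∀ y (i j : Fin d), a y i j = a y j i := fun y i j =>
    congrFun (congrFun (hsym y) j) i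
  have hφdiff : ∀ y ∈ G, DifferentiableAt ℝ φ y := fun y hy =>
    (hφ.contDiffAt (hG.mem_nhds hy)).differentiableAt (by norm_num)
  have hψdiff : ∀ y ∈ G, DifferentiableAt ℝ ψ y := fun y hy =>
    (hψ.contDiffAt (hG.mem_nhds hy)).differentiableAt (by norm_num)
  have hfdiff : ∀ y, DifferentiableAt ℝ f y := fun y =>
    (hf.differentiable (by norm_num)).differentiableAt
  have hφpd : ∀ y ∈ G, ∀ j, DifferentiableAt ℝ (pd φ j) y := fun y hy j =>
    differentiableAt_pd ((hφ.contDiffAt (hG.mem_nhds hy)).of_le (by norm_num)) j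
  have hψpd : ∀ y ∈ G, ∀ j, DifferentiableAt ℝ (pd ψ j) y := fun y hy j =>
    differentiableAt_pd ((hψ.contDiffAt (hG.mem_nhds hy)).of_le (by norm_num)) j
  have hfpd : ∀ (j : Fin d), DifferentiableAt ℝ (pd f j) x := fun j =>
    differentiableAt_pd hf.contDiffAt j
  have hadiff : ∀ i j, DifferentiableAt ℝ (fun z => a z i j) x := fun i j =>
    ((ha i j).contDiffAt hmem).differentiableAt (by norm_num)
  -- first derivatives of h = φψf on G
  have hDh : ∀ y ∈ G, ∀ j, pd (fun z => φ z * ψ z * f z) j y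
      = (pd φ j y * ψ y + φ y * pd ψ j y) * f y + φ y * ψ y * pd f j y := by
    intro y hy j
    rw [pd_mul ((hφdiff y hy).fun_mul (hψdiff y hy)) (hfdiff y) j,
      pd_mul (hφdiff y hy) (hψdiff y hy) j]
  have hDhx : ∀ j, pd (fun z => φ z * ψ z * f z) j x
      = (pd φ j x * ψ x + φ x * pd ψ j x) * f x + φ x * ψ x * pd f j x := fun j => hDh x hx j
  -- second derivatives at x
  have hD2h : ∀ (j i : Fin d), pd2 (fun z => φ z * ψ z * f z) j i x
      = (pd2 φ j i x * ψ x + pd φ i x * pd ψ j x + pd φ j x * pd ψ i x + φ x * pd2 ψ j i x) * f x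
        + (pd φ i x * ψ x + φ x * pd ψ i x) * pd f j x
        + (pd φ j x * ψ x + φ x * pd ψ j x) * pd f i x
        + φ x * ψ x * pd2 f j i x := by
    intro j i
    have hev : pd (fun z => φ z * ψ z * f z) i =ᶠ[nhds x]
        fun y => (pd φ i y * ψ y + φ y * pd ψ i y) * f y + φ y * ψ y * pd f i y :=
      Filter.eventuallyEq_of_mem hmem fun y hy => hDh y hy i
    have e1 : pd2 (fun z => φ z * ψ z * f z) j i x
        = pd (fun y => (pd φ i y * ψ y + φ y * pd ψ i y) * f y + φ y * ψ y * pd f i y) j x :=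
      pd_congr hev j
    rw [e1, pd_add ((((hφpd x hx i).fun_mul (hψdiff x hx)).fun_add
        ((hφdiff x hx).fun_mul (hψpd x hx i))).fun_mul (hfdiff x))
        (((hφdiff x hx).fun_mul (hψdiff x hx)).fun_mul (hfpd i)) j,
      pd_mul (((hφpd x hx i).fun_mul (hψdiff x hx)).fun_add ((hφdiff x hx).fun_mul (hψpd x hx i)))
        (hfdiff x) j,
      pd_add ((hφpd x hx i).fun_mul (hψdiff x hx)) ((hφdiff x hx).fun_mul (hψpd x hx i)) j,
      pd_mul (hφpd x hx i) (hψdiff x hx) j,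
      pd_mul (hφdiff x hx) (hψpd x hx i) j,
      pd_mul ((hφdiff x hx).fun_mul (hψdiff x hx)) (hfpd i) j,
      pd_mul (hφdiff x hx) (hψdiff x hx) j,
      show pd (pd φ i) j x = pd2 φ j i x from rfl,
      show pd (pd ψ i) j x = pd2 ψ j i x from rfl,
      show pd (pd f i) j x = pd2 f j i x from rfl]
    ring
  -- the S-term
  have hSterm : ∀ (i j : Fin d), pd (fun y => a y i j * pd (fun z => -Real.log (ψ z)) j y) i x
      = pd (fun y => a y i j) i x * (-(pd ψ j x / ψ x))
        + a x i j * (-((pd2 ψ i j x * ψ x - pd ψ j x * pd ψ i x) / ψ x ^ 2)) := by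
    intro i j
    have hev2 : (fun y => a y i j * pd (fun z => -Real.log (ψ z)) j y) =ᶠ[nhds x]
        (fun y => a y i j * (-(pd ψ j y / ψ y))) :=
      Filter.eventuallyEq_of_mem hmem fun y hy => by
        rw [pd_neg_log (hψdiff y hy) (ne_of_gt (hψpos y hy)) j]
    have hdivd : DifferentiableAt ℝ (fun y => pd ψ j y / ψ y) x := by
      simp only [div_eq_mul_inv]
      exact (hψpd x hx j).mul ((hψdiff x hx).inv hsx)
    rw [pd_congr hev2 i,
      pd_mul (hadiff i j) hdivd.fun_neg i,
      pd_neg i, pd_div (hψpd x hx j) (hψdiff x hx) hsx i,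
      show pd (pd ψ j) i x = pd2 ψ i j x from rfl]
  -- drift conversion
  have hβv : ∀ i, -(b x i) - (a x).mulVec (grad ψ x) i / ψ x + ∑ j, pd (fun y => a y i j) j x
      = betaOf a b x i - (∑ j, a x i j * pd ψ j x) / ψ x := by
    intro i
    simp only [betaOf, Matrix.mulVec, dotProduct, grad]
    ring
  have hmulΦ : ∀ i, (a x).mulVec (grad (fun z => -Real.log (φ z)) x) i
      = ∑ j, a x i j * (-(pd φ j x / φ x)) := by
    intro i
    simp only [Matrix.mulVec, dotProduct, grad]
    exact sum_eq fun j => by rw [pd_neg_log (hφdiff x hx) htx j]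
  -- eigen translations
  have E1' : (∑ i, b x i * pd ψ i x) + (1/2) * (∑ i, ∑ j, a x i j * pd2 ψ j i x)
      = -lam * ψ x := by
    have h9 := hψeig x hx
    rw [trace_hess] at h9
    simpa only [dotProduct, grad] using h9
  have E2' : (∑ i, betaOf a b x i * pd φ i x) + (1/2) * (∑ i, ∑ j, a x i j * pd2 φ j i x)
      - cOf a b x * φ x = -lam * φ x := by
    have h9 := hφeig x hx
    rw [trace_hess] at h9
    simpa only [dotProduct, grad] using h9
  have hdA' : ∀ j, (∑ i, pd (fun y => a y i j) i x) = betaOf a b x j + b x j := by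
    intro j
    have h8 : ∀ i : Fin d, pd (fun y => a y i j) i x = pd (fun y => a y j i) i x := fun i => by
      rw [show (fun y => a y i j) = (fun y => a y j i) from funext fun y => hsym' y i j]
    rw [sum_eq h8]
    simp only [betaOf]
    ring
  have hAx : ∀ i j : Fin d, a x i j = a x j i := fun i j => hsym' x i j
  have hB := lemB (a x) (fun p q => pd (fun y => a y p q) p x) (fun p q => pd2 ψ p q x)
      (fun p q => pd2 φ p q x) (b x) (betaOf a b x) (fun i => pd ψ i x) (fun i => pd φ i x)
      (cOf a b x) (ψ x) (φ x) lam hsx htx hAx hdA' E1' E2'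
  have hC := lemC (a x) (fun p q => pd2 f p q x)
      (fun p q => pd2 φ p q x * ψ x + pd φ q x * pd ψ p x + pd φ p x * pd ψ q x
        + φ x * pd2 ψ p q x)
      (betaOf a b x) (fun i => pd ψ i x) (fun i => pd φ i x) (fun i => pd f i x)
      (cOf a b x - ∑ i, ∑ j, (pd (fun y => a y i j) i x * (-(pd ψ j x / ψ x))
        + a x i j * (-((pd2 ψ i j x * ψ x - pd ψ j x * pd ψ i x) / ψ x ^ 2))))
      (ψ x) (φ x) (f x) hsx htx hAx
  beta_reduce at hB hC
  beta_reduce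
  simp only [LYstar, dotProduct]
  simp only [hβv, hmulΦ, trace_hess]
  simp only [grad]
  simp only [hDhx, hD2h, hSterm]
  rw [hC, hB, mul_zero, add_zero, one_div (φ x * ψ x),
    inv_mul_cancel_left₀ (mul_ne_zero htx hsx)]
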